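/- Let n, z, σ > 0, ȳ, μ₀ ∈ ℝ, and for m ≥ n define μ_{n,m} = (n/m)ȳ + (1 - n/m)μ₀ and μ_n = (n/(n+z))ȳ + (z/(n+z))μ₀. Define W₂(m) = (μ_n - μ_{n,m})² + (σ/√m - σ/√(n+z))² and W̃₂(m) = (ȳ - μ_{n,m+z})² + (σ/√n - σ/√(m+z))². Then W₂(n+z) = 0, and W̃₂(m) > 0 for all m ≥ n; hence the minimum over both families is attained uniquely by W₂ at m = n+z. -/

import Mathlib

open Real

/-- prior sampling: with `μ_{n,m} = (n/m)ȳ + (1-n/m)μ₀`,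
`μ_n = (n/(n+z))ȳ + (z/(n+z))μ₀`,
`W₂(m) = (μ_n - μ_{n,m})² + (σ/√m - σ/√(n+z))²` and
`W̃₂(m) = (ȳ - μ_{n,m+z})² + (σ/√n - σ/√(m+z))²`, we have `W₂(n+z) = 0`,
`W̃₂(m) > 0` for all `m ≥ n`, and `W₂(m) > 0` for all `m ≥ n` with `m ≠ n+z`;
hence the minimum over both families is attained uniquely by `W₂` at `m = n+z`. -/
theorem stmt_7 (n z σ ybar μ₀ : ℝ) (hn : 0 < n) (hz : 0 < z) (hσ : 0 < σ)
    (μnm : ℝ → ℝ) (hμnm : ∀ m, μnm m = (n / m) * ybar + (1 - n / m) * μ₀)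
    (μn : ℝ) (hμn : μn = (n / (n + z)) * ybar + (z / (n + z)) * μ₀)
    (W Wt : ℝ → ℝ)
    (hW : ∀ m, W m = (μn - μnm m) ^ 2 + (σ / Real.sqrt m - σ / Real.sqrt (n + z)) ^ 2)
    (hWt : ∀ m, Wt m = (ybar - μnm (m + z)) ^ 2
      + (σ / Real.sqrt n - σ / Real.sqrt (m + z)) ^ 2) :
    W (n + z) = 0 ∧ (∀ m, n ≤ m → 0 < Wt m) ∧ (∀ m, n ≤ m → m ≠ n + z → 0 < W m) := by
  have hnz : (0:ℝ) < n + z := by linarith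
  refine ⟨?_, ?_, ?_⟩
  · rw [hW, hμnm, hμn]
    have h1 : (1 : ℝ) - n / (n + z) = z / (n + z) := by field_simp; ring
    rw [h1]; ring
  · intro m hm
    rw [hWt]
    have hmz : (0:ℝ) < m + z := by linarith
    have hsq : Real.sqrt n < Real.sqrt (m + z) := by
      apply Real.sqrt_lt_sqrt hn.le; linarith
    have hsn : (0:ℝ) < Real.sqrt n := Real.sqrt_pos.mpr hn
    have hd : σ / Real.sqrt (m + z) < σ / Real.sqrt n :=
      div_lt_div_of_pos_left hσ hsn hsq
    have hpos : 0 < (σ / Real.sqrt n - σ / Real.sqrt (m + z)) ^ 2 := by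
      apply pow_pos; linarith
    nlinarith [sq_nonneg (ybar - μnm (m + z))]
  · intro m hm hne
    rw [hW]
    have hm0 : (0:ℝ) < m := lt_of_lt_of_le hn hm
    have hsm : (0:ℝ) < Real.sqrt m := Real.sqrt_pos.mpr hm0
    have hsnz : (0:ℝ) < Real.sqrt (n + z) := Real.sqrt_pos.mpr hnz
    have hsne : Real.sqrt m ≠ Real.sqrt (n + z) := by
      intro h
      exact hne ((Real.sqrt_inj hm0.le hnz.le).mp h)
    have hd : σ / Real.sqrt m - σ / Real.sqrt (n + z) ≠ 0 := by
      intro h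
      apply hsne
      have h' : σ * Real.sqrt (n + z) = σ * Real.sqrt m := by
        field_simp at h
        linarith
      exact (mul_left_cancel₀ hσ.ne' h').symm
    have hpos : 0 < (σ / Real.sqrt m - σ / Real.sqrt (n + z)) ^ 2 :=
      lt_of_le_of_ne (sq_nonneg _) (Ne.symm (pow_ne_zero 2 hd))
    nlinarith [sq_nonneg (μn - μnm m)]
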